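/- Fix γ ≥ 3 and set ε_n = log n / n^{1/(γ−1)}. Let X_γ be the number of dominating γ-sets in G(n, 1−ε_n). Then Var(X_γ) = O(n^{2γ−1}), and consequently by Chebyshev's inequality, with probability tending to 1, X_γ ≥ C(n,γ) − O(log^γ n · n^{γ − 1/(γ−1)}). -/

import Mathlib

open MeasureTheory Filter
open scoped ENNReal NNReal

def Dominates {V : Type*} (G : SimpleGraph V) (S : Finset V) : Prop :=
  ∀ v ∉ S, ∃ u ∈ S, G.Adj u v

noncomputable def domCount {V : Type*} [Fintype V] (G : SimpleGraph V) (k : ℕ) : ℕ :=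
  letI : DecidablePred (fun S : Finset V => Dominates G S) := Classical.decPred _
  ((Finset.powersetCard k Finset.univ).filter (fun S => Dominates G S)).card

noncomputable def nonDomCount {V : Type*} [Fintype V] (G : SimpleGraph V) (k : ℕ) : ℕ :=
  letI : DecidablePred (fun S : Finset V => Dominates G S) := Classical.decPred _
  ((Finset.powersetCard k Finset.univ).filter (fun S => ¬ Dominates G S)).card

noncomputable def domNum {V : Type*} [Fintype V] (G : SimpleGraph V) : ℕ :=
  sInf {k | ∃ S : Finset V, S.card = k ∧ Dominates G S}

def graphOf {n : ℕ} (σ : Sym2 (Fin n) → Bool) : SimpleGraph (Fin n) where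
  Adj i j := i ≠ j ∧ σ s(i, j) = true
  symm := by
    constructor
    intro i j h
    exact ⟨h.1.symm, by rw [Sym2.eq_swap]; exact h.2⟩
  loopless := by constructor; intro i h; exact h.1 rfl

noncomputable def erMeasure (n : ℕ) (p : ℝ≥0∞) (h : p ≤ 1) :
    Measure (Sym2 (Fin n) → Bool) :=
  Measure.pi fun _ => (PMF.bernoulli p.toNNReal (by simpa using ENNReal.toNNReal_mono ENNReal.one_ne_top h)).toMeasure



-- cylinder lemma
theorem cyl {n : ℕ} (p : ℝ≥0∞) (h : p ≤ 1) (E : Finset (Sym2 (Fin n))) :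
    erMeasure n p h {σ | ∀ e ∈ E, σ e = false} = (1 - p) ^ E.card := by
  have hset : {σ : Sym2 (Fin n) → Bool | ∀ e ∈ E, σ e = false}
      = Set.pi Set.univ (fun e => if e ∈ E then ({false} : Set Bool) else Set.univ) := by
    ext σ
    simp only [Set.mem_setOf_eq, Set.mem_pi, Set.mem_univ, forall_true_left]
    constructor
    · intro hσ e
      by_cases he : e ∈ E <;> simp [he]
      exact hσ e he
    · intro hσ e he
      have := hσ e
      simp [he] at this
      exact this
  rw [hset, erMeasure, Measure.pi_pi]
  have hb : ∀ e : Sym2 (Fin n), (PMF.bernoulli p.toNNReal (by simpa using ENNReal.toNNReal_mono ENNReal.one_ne_top h)).toMeasure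
      (if e ∈ E then ({false} : Set Bool) else Set.univ)
      = if e ∈ E then (1 - p) else 1 := by
    intro e
    by_cases he : e ∈ E
    · simp only [he, if_true]
      rw [PMF.toMeasure_apply_singleton _ _ (measurableSet_singleton _)]
      refine (PMF.bernoulli_apply (p := p.toNNReal) _ false).trans ?_
      rw [cond_false, ENNReal.coe_sub, ENNReal.coe_one,
        ENNReal.coe_toNNReal (ne_top_of_le_ne_top ENNReal.one_ne_top h)]
    · simp only [he, if_false]
      exact measure_univ
  simp_rw [hb]
  rw [Finset.prod_ite_mem Finset.univ E (fun _ => (1 - p))]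
  simp [Finset.univ_inter]


/-- `A` only depends on coordinates in `K`. -/
def DepOn {n : ℕ} (A : Set (Sym2 (Fin n) → Bool)) (K : Set (Sym2 (Fin n))) : Prop :=
  ∀ σ τ : Sym2 (Fin n) → Bool, (∀ e ∈ K, σ e = τ e) → (σ ∈ A → τ ∈ A)

theorem DepOn.mono {n : ℕ} {A : Set (Sym2 (Fin n) → Bool)} {K K' : Set (Sym2 (Fin n))}
    (h : DepOn A K) (hKK' : K ⊆ K') : DepOn A K' :=
  fun σ τ hagree => h σ τ (fun e he => hagree e (hKK' he))

theorem indep_of_depOn_disjoint {n : ℕ} (p : ℝ≥0∞) (hp : p ≤ 1)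
    {A B : Set (Sym2 (Fin n) → Bool)} {K : Set (Sym2 (Fin n))}
    (hA : DepOn A K) (hB : DepOn B Kᶜ) :
    erMeasure n p hp (A ∩ B) = erMeasure n p hp A * erMeasure n p hp B := by
  classical
  set ν := fun _ : Sym2 (Fin n) => (PMF.bernoulli p.toNNReal (by simpa using ENNReal.toNNReal_mono ENNReal.one_ne_top hp)).toMeasure with hν
  have hmp := measurePreserving_piEquivPiSubtypeProd (α := fun _ : Sym2 (Fin n) => Bool)
    (μ := ν) (fun e => e ∈ K)
  set e := MeasurableEquiv.piEquivPiSubtypeProd (fun _ : Sym2 (Fin n) => Bool)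
    (fun e => e ∈ K) with he
  set A' : Set ({e : Sym2 (Fin n) // e ∈ K} → Bool) := (fun σ i => σ i.1) '' A with hA'
  set B' : Set ({e : Sym2 (Fin n) // ¬ e ∈ K} → Bool) := (fun σ i => σ i.1) '' B with hB'
  have hApre : A = (fun σ : Sym2 (Fin n) → Bool => fun i : {e // e ∈ K} => σ i.1) ⁻¹' A' := by
    ext σ
    constructor
    · intro hσ; exact ⟨σ, hσ, rfl⟩
    · rintro ⟨τ, hτ, hag⟩
      refine hA τ σ (fun x hx => ?_) hτ
      exact congrFun hag ⟨x, hx⟩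
  have hBpre : B = (fun σ : Sym2 (Fin n) → Bool => fun i : {e // ¬ e ∈ K} => σ i.1) ⁻¹' B' := by
    ext σ
    constructor
    · intro hσ; exact ⟨σ, hσ, rfl⟩
    · rintro ⟨τ, hτ, hag⟩
      refine hB τ σ (fun x hx => ?_) hτ
      exact congrFun hag ⟨x, hx⟩
  have hAB : A ∩ B = e ⁻¹' (A' ×ˢ B') := by
    rw [hApre, hBpre]; rfl
  have hA2 : A = e ⁻¹' (A' ×ˢ Set.univ) := by
    rw [hApre]
    ext σ; simp only [Set.mem_preimage, Set.mem_prod, Set.mem_univ, and_true]; rfl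
  have hB2 : B = e ⁻¹' (Set.univ ×ˢ B') := by
    rw [hBpre]
    ext σ; simp only [Set.mem_preimage, Set.mem_prod, Set.mem_univ, true_and]; rfl
  have hμ : erMeasure n p hp = Measure.pi ν := rfl
  have key : ∀ s : Set (({e : Sym2 (Fin n) // e ∈ K} → Bool) × ({e : Sym2 (Fin n) // ¬ e ∈ K} → Bool)),
      erMeasure n p hp (e ⁻¹' s)
        = ((Measure.pi fun _ => (PMF.bernoulli p.toNNReal (by simpa using ENNReal.toNNReal_mono ENNReal.one_ne_top hp)).toMeasure).prod
            (Measure.pi fun _ => (PMF.bernoulli p.toNNReal (by simpa using ENNReal.toNNReal_mono ENNReal.one_ne_top hp)).toMeasure)) s := by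
    intro s
    rw [hμ]
    exact hmp.measure_preimage (MeasurableSet.of_discrete.nullMeasurableSet)
  rw [hAB, hA2, hB2, key, key, key]
  simp [Measure.prod_prod, measure_univ]


instance erProb {n : ℕ} (p : ℝ≥0∞) (hp : p ≤ 1) : IsProbabilityMeasure (erMeasure n p hp) := by
  unfold erMeasure; infer_instance

namespace ER
variable {n : ℕ}

def eset (S : Finset (Fin n)) (v : Fin n) : Finset (Sym2 (Fin n)) :=
  S.image (fun u => s(u, v))

def hitEv (S : Finset (Fin n)) (v : Fin n) : Set (Sym2 (Fin n) → Bool) :=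
  {σ | ∃ u ∈ S, σ s(u, v) = true}

lemma mem_eset {S : Finset (Fin n)} {v : Fin n} {e : Sym2 (Fin n)} :
    e ∈ eset S v ↔ ∃ u ∈ S, e = s(u, v) := by
  simp [eset, eq_comm]

lemma eset_card {S : Finset (Fin n)} {v : Fin n} (hv : v ∉ S) :
    (eset S v).card = S.card := by
  rw [eset, Finset.card_image_of_injOn]
  intro u hu u' hu' h
  rw [Sym2.eq_iff] at h
  rcases h with ⟨h1, _⟩ | ⟨h1, h2⟩
  · exact h1
  · exact absurd (h1 ▸ hu) hv

lemma eset_disj {S S' : Finset (Fin n)} {v w : Fin n} (hvw : v ≠ w)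
    (hv : v ∉ S') (hw : w ∉ S) : Disjoint (eset S v) (eset S' w) := by
  rw [Finset.disjoint_left]
  intro e he he'
  rw [mem_eset] at he he'
  obtain ⟨u, hu, rfl⟩ := he
  obtain ⟨u', hu', h⟩ := he'
  rw [Sym2.eq_iff] at h
  rcases h with ⟨h1, h2⟩ | ⟨h1, h2⟩
  · exact hvw h2
  · exact hv (h2 ▸ hu')

lemma eset_disj_same {S T : Finset (Fin n)} {v : Fin n} (hST : Disjoint S T)
    (hvS : v ∉ S) (hvT : v ∉ T) : Disjoint (eset S v) (eset T v) := by
  rw [Finset.disjoint_left]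
  intro e he he'
  rw [mem_eset] at he he'
  obtain ⟨u, hu, rfl⟩ := he
  obtain ⟨u', hu', h⟩ := he'
  rw [Sym2.eq_iff] at h
  rcases h with ⟨h1, h2⟩ | ⟨h1, h2⟩
  · exact Finset.disjoint_left.1 hST hu (h1 ▸ hu')
  · exact hvS (h1 ▸ hu)

lemma depOn_hitEv (S : Finset (Fin n)) (v : Fin n) : DepOn (hitEv S v) ↑(eset S v) := by
  intro σ τ hag ⟨u, hu, hσ⟩
  exact ⟨u, hu, (hag _ (by rw [Finset.mem_coe, mem_eset]; exact ⟨u, hu, rfl⟩)).symm.trans hσ⟩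

lemma hitEv_compl (S : Finset (Fin n)) (v : Fin n) :
    (hitEv S v)ᶜ = {σ | ∀ e ∈ eset S v, σ e = false} := by
  ext σ
  simp only [hitEv, Set.mem_compl_iff, Set.mem_setOf_eq, not_exists, not_and]
  constructor
  · intro h e he
    rw [mem_eset] at he
    obtain ⟨u, hu, rfl⟩ := he
    exact Bool.eq_false_iff.mpr (fun ht => h u hu ht)
  · intro h u hu ht
    have := h _ (mem_eset.mpr ⟨u, hu, rfl⟩)
    rw [ht] at this; simp at this

lemma mu_hitEv (p : ℝ≥0∞) (hp : p ≤ 1) {S : Finset (Fin n)} {v : Fin n} (hv : v ∉ S) :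
    erMeasure n p hp (hitEv S v) = 1 - (1 - p) ^ S.card := by
  have h1 : erMeasure n p hp (hitEv S v)ᶜ = (1 - p) ^ S.card := by
    rw [hitEv_compl, cyl, eset_card hv]
  have h2 := prob_compl_eq_one_sub (μ := erMeasure n p hp) (s := (hitEv S v)ᶜ)
    MeasurableSet.of_discrete
  rw [compl_compl, h1] at h2
  exact h2

def domEv (S V : Finset (Fin n)) : Set (Sym2 (Fin n) → Bool) :=
  {σ | ∀ v ∈ V, ∃ u ∈ S, σ s(u, v) = true}

lemma depOn_domEv (S V : Finset (Fin n)) :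
    DepOn (domEv S V) {e | ∃ v ∈ V, e ∈ eset S v} := by
  intro σ τ hag hσ v hv
  obtain ⟨u, hu, h⟩ := hσ v hv
  exact ⟨u, hu, (hag _ ⟨v, hv, mem_eset.mpr ⟨u, hu, rfl⟩⟩).symm.trans h⟩

lemma mu_domEv (p : ℝ≥0∞) (hp : p ≤ 1) (S : Finset (Fin n)) (V : Finset (Fin n))
    (hSV : ∀ v ∈ V, v ∉ S) :
    erMeasure n p hp (domEv S V) = (1 - (1 - p) ^ S.card) ^ V.card := by
  classical
  induction V using Finset.induction_on with
  | empty => simp [domEv]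
  | @insert a V ha ih =>
    have haS : a ∉ S := hSV a (Finset.mem_insert_self a V)
    have hV : ∀ v ∈ V, v ∉ S := fun v hv => hSV v (Finset.mem_insert_of_mem hv)
    have hsplit : domEv S (insert a V) = hitEv S a ∩ domEv S V := by
      ext σ
      simp only [domEv, hitEv, Set.mem_inter_iff, Set.mem_setOf_eq, Finset.mem_insert]
      constructor
      · intro h
        exact ⟨h a (Or.inl rfl), fun v hv => h v (Or.inr hv)⟩
      · rintro ⟨h1, h2⟩ v (rfl | hv)
        · exact h1
        · exact h2 v hv
    have hsub : {e | ∃ v ∈ V, e ∈ eset S v} ⊆ (↑(eset S a) : Set (Sym2 (Fin n)))ᶜ := by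
      intro e he
      obtain ⟨v, hv, hev⟩ := he
      intro hmem
      exact Finset.disjoint_left.1
        (eset_disj (show v ≠ a from fun h => ha (h ▸ hv)) (hV v hv) haS) hev hmem
    rw [hsplit, indep_of_depOn_disjoint p hp (depOn_hitEv S a)
      ((depOn_domEv S V).mono hsub), mu_hitEv p hp haS, ih hV,
      Finset.card_insert_of_notMem ha, pow_succ, mul_comm]

def domEv2 (S T V : Finset (Fin n)) : Set (Sym2 (Fin n) → Bool) :=
  {σ | ∀ v ∈ V, (∃ u ∈ S, σ s(u, v) = true) ∧ (∃ u ∈ T, σ s(u, v) = true)}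

lemma mu_hit2 (p : ℝ≥0∞) (hp : p ≤ 1) {S T : Finset (Fin n)} {a : Fin n}
    (hST : Disjoint S T) (haS : a ∉ S) (haT : a ∉ T) :
    erMeasure n p hp (hitEv S a ∩ hitEv T a)
      = (1 - (1 - p) ^ S.card) * (1 - (1 - p) ^ T.card) := by
  have hsub : (↑(eset T a) : Set (Sym2 (Fin n))) ⊆ (↑(eset S a) : Set (Sym2 (Fin n)))ᶜ := by
    intro e he hmem
    exact Finset.disjoint_left.1 (eset_disj_same hST haS haT) hmem he
  rw [indep_of_depOn_disjoint p hp (depOn_hitEv S a) ((depOn_hitEv T a).mono hsub),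
    mu_hitEv p hp haS, mu_hitEv p hp haT]

lemma depOn_domEv2 (S T V : Finset (Fin n)) :
    DepOn (domEv2 S T V) {e | ∃ v ∈ V, e ∈ eset S v ∪ eset T v} := by
  intro σ τ hag hσ v hv
  obtain ⟨⟨u, hu, h1⟩, ⟨w, hw, h2⟩⟩ := hσ v hv
  constructor
  · exact ⟨u, hu, (hag _ ⟨v, hv, Finset.mem_union_left _ (mem_eset.mpr ⟨u, hu, rfl⟩)⟩).symm.trans h1⟩
  · exact ⟨w, hw, (hag _ ⟨v, hv, Finset.mem_union_right _ (mem_eset.mpr ⟨w, hw, rfl⟩)⟩).symm.trans h2⟩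

lemma mu_domEv2 (p : ℝ≥0∞) (hp : p ≤ 1) (S T V : Finset (Fin n)) (hST : Disjoint S T)
    (hSV : ∀ v ∈ V, v ∉ S ∧ v ∉ T) :
    erMeasure n p hp (domEv2 S T V)
      = ((1 - (1 - p) ^ S.card) * (1 - (1 - p) ^ T.card)) ^ V.card := by
  classical
  induction V using Finset.induction_on with
  | empty => simp [domEv2]
  | @insert a V ha ih =>
    have haS := (hSV a (Finset.mem_insert_self a V)).1
    have haT := (hSV a (Finset.mem_insert_self a V)).2
    have hV : ∀ v ∈ V, v ∉ S ∧ v ∉ T := fun v hv => hSV v (Finset.mem_insert_of_mem hv)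
    have hsplit : domEv2 S T (insert a V) = (hitEv S a ∩ hitEv T a) ∩ domEv2 S T V := by
      ext σ
      simp only [domEv2, hitEv, Set.mem_inter_iff, Set.mem_setOf_eq, Finset.mem_insert]
      constructor
      · intro h
        exact ⟨h a (Or.inl rfl), fun v hv => h v (Or.inr hv)⟩
      · rintro ⟨h1, h2⟩ v (rfl | hv)
        · exact h1
        · exact h2 v hv
    have hdepA : DepOn (hitEv S a ∩ hitEv T a) ↑(eset S a ∪ eset T a) := by
      intro σ τ hag hσ
      constructor
      · exact depOn_hitEv S a σ τ
          (fun e he => hag e (by rw [Finset.coe_union]; exact Or.inl he)) hσ.1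
      · exact depOn_hitEv T a σ τ
          (fun e he => hag e (by rw [Finset.coe_union]; exact Or.inr he)) hσ.2
    have hsub : {e | ∃ v ∈ V, e ∈ eset S v ∪ eset T v}
        ⊆ (↑(eset S a ∪ eset T a) : Set (Sym2 (Fin n)))ᶜ := by
      intro e he hmem
      obtain ⟨v, hv, hev⟩ := he
      have hva : v ≠ a := fun h => ha (h ▸ hv)
      rw [Finset.coe_union] at hmem
      rw [Finset.mem_union] at hev
      rcases hmem with hmem | hmem <;> rcases hev with hev | hev
      · exact Finset.disjoint_left.1 (eset_disj hva (hV v hv).1 haS) hev hmem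
      · exact Finset.disjoint_left.1 (eset_disj hva (hV v hv).1 haT) hev hmem
      · exact Finset.disjoint_left.1 (eset_disj hva (hV v hv).2 haS) hev hmem
      · exact Finset.disjoint_left.1 (eset_disj hva (hV v hv).2 haT) hev hmem
    rw [hsplit, indep_of_depOn_disjoint p hp hdepA ((depOn_domEv2 S T V).mono hsub),
      mu_hit2 p hp hST haS haT, ih hV, Finset.card_insert_of_notMem ha, pow_succ, mul_comm]


def D (S : Finset (Fin n)) : Set (Sym2 (Fin n) → Bool) := {σ | Dominates (graphOf σ) S}

theorem mu_D {n : ℕ} (p : ℝ≥0∞) (hp : p ≤ 1) (S : Finset (Fin n)) :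
    erMeasure n p hp (D S) = (1 - (1 - p) ^ S.card) ^ (n - S.card) := by
  classical
  have hset : D S = domEv S (Finset.univ \ S) := by
    ext σ
    simp only [D, domEv, Set.mem_setOf_eq, Dominates, Finset.mem_sdiff, Finset.mem_univ,
      true_and]
    constructor
    · intro h v hv
      obtain ⟨u, hu, hadj⟩ := h v hv
      exact ⟨u, hu, hadj.2⟩
    · intro h v hv
      obtain ⟨u, hu, he⟩ := h v hv
      exact ⟨u, hu, fun huv => hv (huv ▸ hu), he⟩
  have hcard : (Finset.univ \ S).card = n - S.card := by
    rw [Finset.card_sdiff_of_subset (Finset.subset_univ S), Finset.card_univ, Fintype.card_fin]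
  rw [hset, mu_domEv p hp S _ (fun v hv => (Finset.mem_sdiff.1 hv).2), hcard]

theorem mu_D_inter {n : ℕ} (p : ℝ≥0∞) (hp : p ≤ 1) {S T : Finset (Fin n)}
    (hST : Disjoint S T) (hS : S.card = T.card) :
    erMeasure n p hp (D S ∩ D T)
      ≤ ((1 - (1 - p) ^ S.card) * (1 - (1 - p) ^ T.card)) ^ (n - (S.card + T.card)) := by
  classical
  have hsub : D S ∩ D T ⊆ domEv2 S T (Finset.univ \ (S ∪ T)) := by
    rintro σ ⟨h1, h2⟩ v hv
    rw [Finset.mem_sdiff, Finset.mem_union] at hv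
    have hvS : v ∉ S := fun h => hv.2 (Or.inl h)
    have hvT : v ∉ T := fun h => hv.2 (Or.inr h)
    obtain ⟨u, hu, hadj⟩ := h1 v hvS
    obtain ⟨u', hu', hadj'⟩ := h2 v hvT
    exact ⟨⟨u, hu, hadj.2⟩, ⟨u', hu', hadj'.2⟩⟩
  have hcard : (Finset.univ \ (S ∪ T)).card = n - (S.card + T.card) := by
    rw [Finset.card_sdiff_of_subset (Finset.subset_univ _), Finset.card_univ, Fintype.card_fin,
      Finset.card_union_of_disjoint hST]
  calc erMeasure n p hp (D S ∩ D T)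
      ≤ erMeasure n p hp (domEv2 S T (Finset.univ \ (S ∪ T))) := measure_mono hsub
    _ = ((1 - (1 - p) ^ S.card) * (1 - (1 - p) ^ T.card)) ^ (n - (S.card + T.card)) := by
        rw [mu_domEv2 p hp S T _ hST (fun v hv => by
          rw [Finset.mem_sdiff, Finset.mem_union] at hv
          exact ⟨fun h => hv.2 (Or.inl h), fun h => hv.2 (Or.inr h)⟩), hcard]

-- X as sum of indicators
lemma domCount_eq (γ : ℕ) (σ : Sym2 (Fin n) → Bool) :
    (domCount (graphOf σ) γ : ℝ)
      = ∑ S ∈ Finset.powersetCard γ (Finset.univ : Finset (Fin n)),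
          Set.indicator (D S) (fun _ => (1 : ℝ)) σ := by
  classical
  unfold domCount
  rw [Finset.card_filter]
  push_cast
  refine Finset.sum_congr rfl fun S _ => ?_
  rw [Set.indicator_apply]
  by_cases h : Dominates (graphOf σ) S
  · simp [h, D, Set.mem_setOf_eq]
  · simp [h, D, Set.mem_setOf_eq]

lemma integral_X (γ : ℕ) (p : ℝ≥0∞) (hp : p ≤ 1) :
    ∫ σ, (domCount (graphOf σ) γ : ℝ) ∂ erMeasure n p hp
      = ∑ S ∈ Finset.powersetCard γ (Finset.univ : Finset (Fin n)),
          (erMeasure n p hp (D S)).toReal := by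
  simp_rw [domCount_eq γ]
  rw [integral_finset_sum _ (fun S _ => Integrable.of_finite)]
  refine Finset.sum_congr rfl fun S _ => ?_
  rw [integral_indicator_const _ MeasurableSet.of_discrete]
  simp
  rfl

lemma integral_X_sq (γ : ℕ) (p : ℝ≥0∞) (hp : p ≤ 1) :
    ∫ σ, ((domCount (graphOf σ) γ : ℝ)) ^ 2 ∂ erMeasure n p hp
      = ∑ S ∈ Finset.powersetCard γ (Finset.univ : Finset (Fin n)),
          ∑ T ∈ Finset.powersetCard γ (Finset.univ : Finset (Fin n)),
          (erMeasure n p hp (D S ∩ D T)).toReal := by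
  have hsq : ∀ σ : Sym2 (Fin n) → Bool, ((domCount (graphOf σ) γ : ℝ)) ^ 2
      = ∑ S ∈ Finset.powersetCard γ (Finset.univ : Finset (Fin n)),
          ∑ T ∈ Finset.powersetCard γ (Finset.univ : Finset (Fin n)),
          Set.indicator (D S ∩ D T) (fun _ => (1 : ℝ)) σ := by
    intro σ
    rw [sq, domCount_eq γ, Finset.sum_mul_sum]
    refine Finset.sum_congr rfl fun S _ => Finset.sum_congr rfl fun T _ => ?_
    rw [← Set.inter_indicator_mul]
    simp [Set.indicator_apply]
  simp_rw [hsq]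
  rw [integral_finset_sum _ (fun S _ => Integrable.of_finite)]
  refine Finset.sum_congr rfl fun S _ => ?_
  rw [integral_finset_sum _ (fun T _ => Integrable.of_finite)]
  refine Finset.sum_congr rfl fun T _ => ?_
  rw [integral_indicator_const _ MeasurableSet.of_discrete]
  simp
  rfl

-- abstract variance bound, m w : abstract measures-values
theorem var_core (γ : ℕ) (hγ : 1 ≤ γ) (hn : 2 * γ ≤ n)
    (a qr : ℝ) (ha0 : 0 ≤ a) (ha1 : a ≤ 1) (haq : a = 1 - qr) (hq : qr ≤ 1 / n)
    (w : Finset (Fin n) → Finset (Fin n) → ℝ)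
    (hw0 : ∀ S T, 0 ≤ w S T) (hw1 : ∀ S T, w S T ≤ 1)
    (hwd : ∀ S T, S ∈ Finset.powersetCard γ (Finset.univ : Finset (Fin n)) →
      T ∈ Finset.powersetCard γ (Finset.univ : Finset (Fin n)) → Disjoint S T →
      w S T ≤ (a * a) ^ (n - 2 * γ)) :
    (∑ S ∈ Finset.powersetCard γ (Finset.univ : Finset (Fin n)),
      ∑ T ∈ Finset.powersetCard γ (Finset.univ : Finset (Fin n)),
        (w S T - a ^ (n - γ) * a ^ (n - γ)))
      ≤ (3 * γ : ℝ) * (n : ℝ) ^ (2 * γ - 1) := by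
  classical
  set PP := Finset.powersetCard γ (Finset.univ : Finset (Fin n)) with hPP
  have hn1 : 1 ≤ n := le_trans (by omega) hn
  have hqr0 : 0 ≤ qr := by
    by_contra h
    push_neg at h
    linarith [ha1, haq]
  -- Bernoulli : 1 - a ^ (2*γ) ≤ 2*γ*qr
  have hbern : ∀ m : ℕ, 1 - a ^ m ≤ m * qr := by
    intro m
    have h1 : (-2 : ℝ) ≤ a - 1 := by linarith
    have := one_add_mul_le_pow h1 m
    have h2 : (1 : ℝ) + (a - 1) = a := by ring
    rw [h2] at this
    nlinarith [this]
  -- pointwise bound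
  have hterm : ∀ S ∈ PP, ∀ T ∈ PP, w S T - a ^ (n - γ) * a ^ (n - γ)
      ≤ (2 * γ * qr) + (if ¬ Disjoint S T then (1:ℝ) else 0) := by
    intro S hS T hT
    by_cases hd : Disjoint S T
    · have h1 : w S T ≤ (a * a) ^ (n - 2 * γ) := hwd S T hS hT hd
      have hexp : (n - γ) + (n - γ) = (n - 2*γ) + (n - 2*γ) + 2 * γ := by omega
      have h2 : a ^ (n - γ) * a ^ (n - γ) = (a*a) ^ (n - 2*γ) * a ^ (2*γ) := by
        rw [← pow_add, hexp, mul_pow, ← pow_add, ← pow_add]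
      have h3 : (a*a) ^ (n - 2*γ) ≤ 1 := by
        apply pow_le_one₀ (by nlinarith) (by nlinarith)
      have h4 : 1 - a ^ (2*γ) ≤ 2*γ*qr := by
        have := hbern (2*γ)
        push_cast at this
        linarith
      have h5 : w S T - a ^ (n - γ) * a ^ (n - γ)
          ≤ (a*a) ^ (n - 2*γ) * (1 - a ^ (2*γ)) := by
        rw [h2]; nlinarith [hw0 S T]
      have hp1 : a ^ (2*γ) ≤ 1 := pow_le_one₀ ha0 ha1
      have h6 : (a*a) ^ (n - 2*γ) * (1 - a ^ (2*γ)) ≤ 1 * (2*γ*qr) := by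
        apply mul_le_mul h3 h4 (by nlinarith) one_pos.le
      simp only [if_neg (not_not_intro hd)]
      linarith
    · simp only [if_pos hd]
      have := hw1 S T
      have h7 : (0:ℝ) ≤ 2*γ*qr := by positivity
      nlinarith [mul_nonneg (pow_nonneg ha0 (n-γ)) (pow_nonneg ha0 (n-γ))]
  -- counting lemma
  have hcountN : ∀ S ∈ PP, (PP.filter (fun T => ¬ Disjoint S T)).card ≤ γ * n ^ (γ - 1) := by
    intro S hS
    have hScard : S.card = γ := (Finset.mem_powersetCard_univ).1 hS
    have hsub : PP.filter (fun T => ¬ Disjoint S T)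
        ⊆ S.biUnion (fun x => PP.filter (fun T => x ∈ T)) := by
      intro T hT
      rw [Finset.mem_filter] at hT
      obtain ⟨hT1, hT2⟩ := hT
      rw [Finset.not_disjoint_iff] at hT2
      obtain ⟨x, hxS, hxT⟩ := hT2
      exact Finset.mem_biUnion.2 ⟨x, hxS, Finset.mem_filter.2 ⟨hT1, hxT⟩⟩
    calc (PP.filter (fun T => ¬ Disjoint S T)).card
        ≤ (S.biUnion (fun x => PP.filter (fun T => x ∈ T))).card :=
          Finset.card_le_card hsub
      _ ≤ ∑ x ∈ S, (PP.filter (fun T => x ∈ T)).card := Finset.card_biUnion_le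
      _ ≤ ∑ _x ∈ S, n ^ (γ - 1) := by
          apply Finset.sum_le_sum
          intro x _
          have hinj : ∀ T ∈ PP.filter (fun T => x ∈ T), T.erase x
              ∈ Finset.powersetCard (γ - 1) (Finset.univ : Finset (Fin n)) := by
            intro T hT
            rw [Finset.mem_filter] at hT
            rw [Finset.mem_powersetCard_univ, Finset.card_erase_of_mem hT.2,
              (Finset.mem_powersetCard_univ).1 hT.1]
          have hcard := Finset.card_le_card_of_injOn (fun T : Finset (Fin n) => T.erase x) hinj ?_
          · calc (PP.filter (fun T => x ∈ T)).card
                ≤ (Finset.powersetCard (γ - 1) (Finset.univ : Finset (Fin n))).card := hcard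
              _ = Nat.choose n (γ - 1) := by
                  rw [Finset.card_powersetCard, Finset.card_univ, Fintype.card_fin]
              _ ≤ n ^ (γ - 1) := Nat.choose_le_pow _ _
          · intro T hT T' hT' h
            rw [Finset.mem_coe, Finset.mem_filter] at hT hT'
            rw [← Finset.insert_erase hT.2, ← Finset.insert_erase hT'.2]
            simp only at h
            rw [h]
      _ = γ * n ^ (γ - 1) := by rw [Finset.sum_const, hScard, smul_eq_mul]
  have hcardPP : (PP.card : ℝ) ≤ (n : ℝ) ^ γ := by
    have : PP.card = Nat.choose n γ := by
      rw [hPP, Finset.card_powersetCard, Finset.card_univ, Fintype.card_fin]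
    rw [this]
    exact_mod_cast Nat.choose_le_pow n γ
  have hcardPP0 : (0 : ℝ) ≤ (PP.card : ℝ) := Nat.cast_nonneg _
  -- sum the pointwise bound
  have hmain : (∑ S ∈ PP, ∑ T ∈ PP, (w S T - a ^ (n - γ) * a ^ (n - γ)))
      ≤ (PP.card : ℝ) * ((PP.card : ℝ) * (2 * γ * qr) + (γ : ℝ) * (n : ℝ) ^ (γ - 1)) := by
    have hinner : ∀ S ∈ PP, (∑ T ∈ PP, (w S T - a ^ (n - γ) * a ^ (n - γ)))
        ≤ (PP.card : ℝ) * (2 * γ * qr) + (γ : ℝ) * (n : ℝ) ^ (γ - 1) := by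
      intro S hS
      calc (∑ T ∈ PP, (w S T - a ^ (n - γ) * a ^ (n - γ)))
          ≤ ∑ T ∈ PP, ((2 * γ * qr) + (if ¬ Disjoint S T then (1:ℝ) else 0)) :=
            Finset.sum_le_sum (fun T hT => hterm S hS T hT)
        _ = (PP.card : ℝ) * (2 * γ * qr)
            + ((PP.filter (fun T => ¬ Disjoint S T)).card : ℝ) := by
            rw [Finset.sum_add_distrib, Finset.sum_const, Finset.sum_boole, nsmul_eq_mul]
        _ ≤ (PP.card : ℝ) * (2 * γ * qr) + (γ : ℝ) * (n : ℝ) ^ (γ - 1) := by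
            have := hcountN S hS
            have h2 : ((PP.filter (fun T => ¬ Disjoint S T)).card : ℝ)
                ≤ ((γ * n ^ (γ - 1) : ℕ) : ℝ) := by exact_mod_cast this
            push_cast at h2
            linarith
    calc (∑ S ∈ PP, ∑ T ∈ PP, (w S T - a ^ (n - γ) * a ^ (n - γ)))
        ≤ ∑ _S ∈ PP, ((PP.card : ℝ) * (2 * γ * qr) + (γ : ℝ) * (n : ℝ) ^ (γ - 1)) :=
          Finset.sum_le_sum hinner
      _ = (PP.card : ℝ) * ((PP.card : ℝ) * (2 * γ * qr) + (γ : ℝ) * (n : ℝ) ^ (γ - 1)) := by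
          rw [Finset.sum_const, nsmul_eq_mul]
  -- final arithmetic
  have hnpos : (0 : ℝ) < (n : ℝ) := by exact_mod_cast hn1
  have hpow1 : (n : ℝ) ^ γ = (n : ℝ) ^ (γ - 1) * (n : ℝ) := by
    rw [← pow_succ]
    congr 1
    omega
  have hstep1 : (PP.card : ℝ) * (2 * γ * qr) ≤ 2 * γ * (n : ℝ) ^ (γ - 1) := by
    have h1 : (PP.card : ℝ) * (2 * γ * qr) ≤ (n:ℝ)^γ * (2 * γ * (1/n)) := by
      apply mul_le_mul hcardPP ?_ (by positivity) (by positivity)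
      apply mul_le_mul_of_nonneg_left hq (by positivity)
    have h2 : (n:ℝ)^γ * (2 * γ * (1/n)) = 2 * γ * (n : ℝ) ^ (γ - 1) := by
      rw [hpow1]
      field_simp
    linarith
  have hexp2 : γ + (γ - 1) = 2 * γ - 1 := by omega
  calc (∑ S ∈ PP, ∑ T ∈ PP, (w S T - a ^ (n - γ) * a ^ (n - γ)))
      ≤ (PP.card : ℝ) * ((PP.card : ℝ) * (2 * γ * qr) + (γ : ℝ) * (n : ℝ) ^ (γ - 1)) := hmain
    _ ≤ (n:ℝ)^γ * (2 * γ * (n : ℝ) ^ (γ - 1) + (γ : ℝ) * (n : ℝ) ^ (γ - 1)) := by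
        apply mul_le_mul hcardPP ?_ ?_ (by positivity)
        · linarith
        · have : (0:ℝ) ≤ (PP.card : ℝ) * (2 * γ * qr) := by positivity
          positivity
    _ = (3 * γ : ℝ) * ((n:ℝ)^γ * (n : ℝ) ^ (γ - 1)) := by ring
    _ = (3 * γ : ℝ) * (n : ℝ) ^ (2 * γ - 1) := by rw [← pow_add, hexp2]

/-- Chebyshev inequality, lower-tail form, on the finite ER space. -/
theorem cheb {n : ℕ} (p : ℝ≥0∞) (hp : p ≤ 1) (f : (Sym2 (Fin n) → Bool) → ℝ) (t : ℝ)
    (ht : 0 < t) :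
    (erMeasure n p hp {σ | f σ ≤ (∫ x, f x ∂ erMeasure n p hp) - t}).toReal
      ≤ ((∫ x, (f x) ^ 2 ∂ erMeasure n p hp) - (∫ x, f x ∂ erMeasure n p hp) ^ 2) / t ^ 2 := by
  set μ := erMeasure n p hp
  set m := ∫ x, f x ∂μ with hm
  have hvar : ∫ x, (f x - m) ^ 2 ∂μ = (∫ x, (f x) ^ 2 ∂μ) - m ^ 2 := by
    have hptw : ∀ x, (f x - m) ^ 2 = (f x) ^ 2 - (2 * m) * f x + m ^ 2 := by intro x; ring
    simp_rw [hptw]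
    rw [integral_add (by exact (Integrable.of_finite).sub (Integrable.of_finite))
        (integrable_const _),
      integral_sub (Integrable.of_finite) (by exact (Integrable.of_finite)),
      integral_const, integral_const_mul]
    simp [← hm]
    ring
  have hmarkov := mul_meas_ge_le_integral_of_nonneg (μ := μ)
    (f := fun x => (f x - m) ^ 2) (Eventually.of_forall (fun x => sq_nonneg _))
    Integrable.of_finite (t ^ 2)
  rw [hvar] at hmarkov
  have hsub : {σ | f σ ≤ m - t} ⊆ {x | t ^ 2 ≤ (f x - m) ^ 2} := by
    intro σ hσ
    simp only [Set.mem_setOf_eq] at hσ ⊢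
    nlinarith
  have hmono : (μ {σ | f σ ≤ m - t}).toReal ≤ (μ {x | t ^ 2 ≤ (f x - m) ^ 2}).toReal := by
    apply ENNReal.toReal_mono (measure_ne_top _ _) (measure_mono hsub)
  rw [le_div_iff₀ (by positivity)]
  calc (μ {σ | f σ ≤ m - t}).toReal * t ^ 2
      ≤ (μ {x | t ^ 2 ≤ (f x - m) ^ 2}).toReal * t ^ 2 := by nlinarith
    _ = t ^ 2 * (μ {x | t ^ 2 ≤ (f x - m) ^ 2}).toReal := by ring
    _ ≤ (∫ x, (f x) ^ 2 ∂μ) - m ^ 2 := hmarkov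


theorem var_final {n : ℕ} (γ : ℕ) (hγ : 1 ≤ γ) (hn : 2 * γ ≤ n) (p : ℝ≥0∞) (hp : p ≤ 1)
    (hq : ((1 - p) ^ γ).toReal ≤ 1 / n) :
    (∫ σ, ((domCount (graphOf σ) γ : ℝ)) ^ 2 ∂ erMeasure n p hp)
      - (∫ σ, (domCount (graphOf σ) γ : ℝ) ∂ erMeasure n p hp) ^ 2
      ≤ (3 * γ : ℝ) * (n : ℝ) ^ (2 * γ - 1) := by
  classical
  set q : ℝ≥0∞ := (1 - p) ^ γ with hqdef
  have hq1 : q ≤ 1 := pow_le_one' tsub_le_self γ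
  set a : ℝ := (1 - q).toReal with hadef
  set qr : ℝ := q.toReal with hqrdef
  have hqr0 : 0 ≤ qr := ENNReal.toReal_nonneg
  have haq : a = 1 - qr := by
    rw [hadef, hqrdef, ENNReal.toReal_sub_of_le hq1 ENNReal.one_ne_top, ENNReal.toReal_one]
  have ha0 : 0 ≤ a := ENNReal.toReal_nonneg
  have ha1 : a ≤ 1 := by rw [haq]; linarith
  rw [integral_X_sq, integral_X]
  have hDS : ∀ S ∈ Finset.powersetCard γ (Finset.univ : Finset (Fin n)),
      (erMeasure n p hp (D S)).toReal = a ^ (n - γ) := by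
    intro S hS
    rw [mu_D p hp S, (Finset.mem_powersetCard_univ).1 hS, ENNReal.toReal_pow]
  rw [Finset.sum_congr rfl hDS, sq, Finset.sum_mul_sum]
  rw [← Finset.sum_sub_distrib]
  simp_rw [← Finset.sum_sub_distrib]
  apply var_core γ hγ hn a qr ha0 ha1 haq hq
  · intro S T; exact ENNReal.toReal_nonneg
  · intro S T
    have h1 : erMeasure n p hp (D S ∩ D T) ≤ 1 :=
      prob_le_one
    calc (erMeasure n p hp (D S ∩ D T)).toReal
        ≤ (1 : ℝ≥0∞).toReal := ENNReal.toReal_mono ENNReal.one_ne_top h1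
      _ = 1 := ENNReal.toReal_one
  · intro S T hS hT hd
    have hSc := (Finset.mem_powersetCard_univ).1 hS
    have hTc := (Finset.mem_powersetCard_univ).1 hT
    have h1 := mu_D_inter p hp hd (by rw [hSc, hTc])
    rw [hSc, hTc] at h1
    have hexp : n - (γ + γ) = n - 2 * γ := by omega
    rw [hexp] at h1
    have h2 : (((1 - q) * (1 - q)) ^ (n - 2 * γ) : ℝ≥0∞) ≠ ⊤ := by
      apply ne_top_of_le_ne_top ENNReal.one_ne_top
      apply pow_le_one'
      calc (1 - q) * (1 - q) ≤ 1 * 1 :=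
        mul_le_mul' tsub_le_self tsub_le_self
      _ = 1 := by rw [mul_one]
    calc (erMeasure n p hp (D S ∩ D T)).toReal
        ≤ (((1 - q) * (1 - q)) ^ (n - 2 * γ) : ℝ≥0∞).toReal := ENNReal.toReal_mono h2 h1
      _ = (a * a) ^ (n - 2 * γ) := by
          rw [ENNReal.toReal_pow, ENNReal.toReal_mul]

theorem exp_lower {n : ℕ} (γ : ℕ) (p : ℝ≥0∞) (hp : p ≤ 1) :
    (n.choose γ : ℝ) - (∫ σ, (domCount (graphOf σ) γ : ℝ) ∂ erMeasure n p hp)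
      ≤ (n : ℝ) ^ γ * ((n : ℝ) * ((1 - p) ^ γ).toReal) := by
  classical
  set q : ℝ≥0∞ := (1 - p) ^ γ with hqdef
  have hq1 : q ≤ 1 := pow_le_one' tsub_le_self γ
  set a : ℝ := (1 - q).toReal with hadef
  set qr : ℝ := q.toReal with hqrdef
  have hqr0 : 0 ≤ qr := ENNReal.toReal_nonneg
  have haq : a = 1 - qr := by
    rw [hadef, hqrdef, ENNReal.toReal_sub_of_le hq1 ENNReal.one_ne_top, ENNReal.toReal_one]
  have ha0 : 0 ≤ a := ENNReal.toReal_nonneg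
  have ha1 : a ≤ 1 := by rw [haq]; linarith
  rw [integral_X]
  have hDS : ∀ S ∈ Finset.powersetCard γ (Finset.univ : Finset (Fin n)),
      (erMeasure n p hp (D S)).toReal = a ^ (n - γ) := by
    intro S hS
    rw [mu_D p hp S, (Finset.mem_powersetCard_univ).1 hS, ENNReal.toReal_pow]
  rw [Finset.sum_congr rfl hDS, Finset.sum_const, Finset.card_powersetCard,
    Finset.card_univ, Fintype.card_fin, nsmul_eq_mul]
  have hbern : 1 - a ^ (n - γ) ≤ (n - γ : ℕ) * qr := by
    have h1 : (-2 : ℝ) ≤ a - 1 := by linarith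
    have := one_add_mul_le_pow h1 (n - γ)
    have h2 : (1 : ℝ) + (a - 1) = a := by ring
    rw [h2] at this
    nlinarith
  have hchoose : (n.choose γ : ℝ) ≤ (n : ℝ) ^ γ := by
    exact_mod_cast Nat.choose_le_pow n γ
  have hchoose0 : (0 : ℝ) ≤ (n.choose γ : ℝ) := Nat.cast_nonneg _
  have hng : ((n - γ : ℕ) : ℝ) * qr ≤ (n : ℝ) * qr := by
    apply mul_le_mul_of_nonneg_right _ hqr0
    exact_mod_cast Nat.cast_le.2 (Nat.sub_le n γ)
  have hpow1 : a ^ (n - γ) ≤ 1 := pow_le_one₀ ha0 ha1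
  have hpow0 : 0 ≤ a ^ (n - γ) := pow_nonneg ha0 _
  calc (n.choose γ : ℝ) - (n.choose γ : ℝ) * a ^ (n - γ)
      = (n.choose γ : ℝ) * (1 - a ^ (n - γ)) := by ring
    _ ≤ (n : ℝ) ^ γ * ((n : ℝ) * qr) := by
        apply mul_le_mul hchoose _ _ (by positivity)
        · calc 1 - a ^ (n - γ) ≤ (n - γ : ℕ) * qr := hbern
            _ ≤ (n : ℝ) * qr := hng
        · linarith

lemma eps_facts (γ n : ℕ) (hγ : 3 ≤ γ) (h3 : 3 ≤ n) (hlog1 : 1 ≤ Real.log n)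
    (hA : Real.log n ≤ (n:ℝ) ^ (1 / ((γ:ℝ) - 1)))
    (hB : Real.log n ≤ (n:ℝ) ^ ((1 / ((γ:ℝ) - 1)) / (γ:ℝ))) :
    ((1 - (1 - ENNReal.ofReal (Real.log n / (n:ℝ) ^ (1 / ((γ:ℝ) - 1))))) ^ γ).toReal
        = (Real.log n / (n:ℝ) ^ (1 / ((γ:ℝ) - 1))) ^ γ
    ∧ (Real.log n / (n:ℝ) ^ (1 / ((γ:ℝ) - 1))) ^ γ ≤ 1 / n
    ∧ (n:ℝ) ^ γ * ((n:ℝ) * (Real.log n / (n:ℝ) ^ (1 / ((γ:ℝ) - 1))) ^ γ)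
        = Real.log n ^ γ * (n:ℝ) ^ ((γ:ℝ) - 1 / ((γ:ℝ) - 1)) := by
  have hγ2 : (2:ℝ) ≤ (γ:ℝ) - 1 := by
    have : (3:ℝ) ≤ (γ:ℝ) := by exact_mod_cast hγ
    linarith
  have hγ1ne : ((γ:ℝ) - 1) ≠ 0 := by linarith
  have hγne : (γ:ℝ) ≠ 0 := by
    have : (3:ℝ) ≤ (γ:ℝ) := by exact_mod_cast hγ
    linarith
  set c1 : ℝ := 1 / ((γ:ℝ) - 1) with hc1
  have hc1pos : 0 < c1 := by positivity
  have hn0 : (0:ℝ) < n := by exact_mod_cast (by omega : 0 < n)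
  have hn1 : (1:ℝ) ≤ n := by exact_mod_cast (by omega : 1 ≤ n)
  have hlog0 : 0 ≤ Real.log n := by linarith
  have hrp : (0:ℝ) < (n:ℝ) ^ c1 := Real.rpow_pos_of_pos hn0 c1
  set ε : ℝ := Real.log n / (n:ℝ) ^ c1 with hε
  have hε0 : 0 ≤ ε := div_nonneg hlog0 hrp.le
  have hε1 : ε ≤ 1 := (div_le_one hrp).mpr hA
  have hofReal : ENNReal.ofReal ε ≤ 1 := ENNReal.ofReal_le_one.mpr hε1
  have hr : (1 : ℝ≥0∞) - (1 - ENNReal.ofReal ε) = ENNReal.ofReal ε :=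
    ENNReal.sub_sub_cancel ENNReal.one_ne_top hofReal
  have fact1 : ((1 - (1 - ENNReal.ofReal ε)) ^ γ).toReal = ε ^ γ := by
    rw [hr, ← ENNReal.ofReal_pow hε0, ENNReal.toReal_ofReal (by positivity)]
  -- key rpow identity : ((n:ℝ)^c1)^γ = n * n^c1
  have hkey : ((n:ℝ) ^ c1) ^ γ = (n:ℝ) * (n:ℝ) ^ c1 := by
    rw [← Real.rpow_natCast ((n:ℝ) ^ c1) γ, ← Real.rpow_mul hn0.le]
    have : c1 * (γ:ℝ) = 1 + c1 := by
      rw [hc1]; field_simp; ring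
    rw [this, Real.rpow_add hn0, Real.rpow_one]
  -- log^γ ≤ n^c1
  have hlogpow : Real.log n ^ γ ≤ (n:ℝ) ^ c1 := by
    have h1 : Real.log n ^ γ ≤ ((n:ℝ) ^ (c1 / (γ:ℝ))) ^ γ :=
      pow_le_pow_left₀ hlog0 hB γ
    have h2 : ((n:ℝ) ^ (c1 / (γ:ℝ))) ^ γ = (n:ℝ) ^ c1 := by
      rw [← Real.rpow_natCast ((n:ℝ) ^ (c1 / (γ:ℝ))) γ, ← Real.rpow_mul hn0.le]
      congr 1
      field_simp
    rw [h2] at h1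
    exact h1
  have fact2 : ε ^ γ ≤ 1 / n := by
    rw [hε, div_pow, hkey]
    rw [div_le_div_iff₀ (by positivity) hn0]
    calc Real.log n ^ γ * (n:ℝ) ≤ (n:ℝ) ^ c1 * (n:ℝ) :=
        mul_le_mul_of_nonneg_right hlogpow hn0.le
      _ = 1 * ((n:ℝ) * (n:ℝ) ^ c1) := by ring
  have fact3 : (n:ℝ) ^ γ * ((n:ℝ) * ε ^ γ)
      = Real.log n ^ γ * (n:ℝ) ^ ((γ:ℝ) - c1) := by
    rw [hε, div_pow, hkey]
    rw [Real.rpow_sub hn0, ← Real.rpow_natCast (n:ℝ) γ]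
    field_simp
  exact ⟨fact1, fact2, fact3⟩

end ER

/-- For `γ ≥ 3` and `ε_n = log n / n^(1/(γ-1))`, the number `X_γ` of dominating
`γ`-sets in `G(n, 1-ε_n)` has variance `O(n^(2γ-1))`, and with probability
tending to 1, `X_γ ≥ C(n,γ) - O(log^γ n · n^(γ-1/(γ-1)))`. -/
theorem stmt16 (γ : ℕ) (hγ : 3 ≤ γ) :
    (∃ C : ℝ, ∃ N : ℕ, ∀ n : ℕ, N ≤ n →
      (∫ σ, ((domCount (graphOf σ) γ : ℝ)) ^ 2
          ∂ erMeasure n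
            (1 - ENNReal.ofReal (Real.log n / (n : ℝ) ^ ((1 : ℝ) / ((γ : ℝ) - 1))))
            tsub_le_self) -
        (∫ σ, (domCount (graphOf σ) γ : ℝ)
          ∂ erMeasure n
            (1 - ENNReal.ofReal (Real.log n / (n : ℝ) ^ ((1 : ℝ) / ((γ : ℝ) - 1))))
            tsub_le_self) ^ 2 ≤
        C * (n : ℝ) ^ (2 * γ - 1)) ∧
    (∃ C : ℝ, Tendsto
      (fun n : ℕ =>
        (erMeasure n
            (1 - ENNReal.ofReal (Real.log n / (n : ℝ) ^ ((1 : ℝ) / ((γ : ℝ) - 1))))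
            tsub_le_self
          {σ | (Nat.choose n γ : ℝ) -
              C * Real.log n ^ γ * (n : ℝ) ^ ((γ : ℝ) - 1 / ((γ : ℝ) - 1)) ≤
            (domCount (graphOf σ) γ : ℝ)}).toReal)
      atTop (nhds 1)) := by
  classical
  have hγR : (3:ℝ) ≤ (γ:ℝ) := by exact_mod_cast hγ
  have hc1pos : (0:ℝ) < 1 / ((γ:ℝ) - 1) := by
    apply one_div_pos.mpr; linarith
  have hγRpos : (0:ℝ) < (γ:ℝ) := by linarith
  have hcBpos : (0:ℝ) < (1 / ((γ:ℝ) - 1)) / (γ:ℝ) := div_pos hc1pos hγRpos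
  have hlittle : ∀ r : ℝ, 0 < r → ∀ᶠ x : ℝ in atTop, Real.log x ≤ x ^ r := by
    intro r hr
    have h := (isLittleO_log_rpow_atTop hr).def one_pos
    filter_upwards [h, eventually_ge_atTop (1:ℝ)] with x h1 h2
    have hx0 : (0:ℝ) ≤ x := by linarith
    calc Real.log x ≤ |Real.log x| := le_abs_self _
      _ ≤ 1 * |x ^ r| := by simpa [Real.norm_eq_abs] using h1
      _ = x ^ r := by rw [one_mul, abs_of_nonneg (Real.rpow_nonneg hx0 r)]
  have hts : Tendsto (fun n : ℕ => (n:ℝ)) atTop atTop := tendsto_natCast_atTop_atTop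
  have hlogts : Tendsto (fun n : ℕ => Real.log n) atTop atTop :=
    Real.tendsto_log_atTop.comp hts
  have hNev : ∀ᶠ n : ℕ in atTop, (2*γ ≤ n ∧ 3 ≤ n) ∧ (1 ≤ Real.log n
      ∧ Real.log n ≤ (n:ℝ) ^ (1 / ((γ:ℝ) - 1))
      ∧ Real.log n ≤ (n:ℝ) ^ ((1 / ((γ:ℝ) - 1)) / (γ:ℝ))) := by
    filter_upwards [eventually_ge_atTop (2*γ), eventually_ge_atTop 3,
      hts.eventually (hlittle _ hc1pos), hts.eventually (hlittle _ hcBpos),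
      hlogts.eventually_ge_atTop 1] with n h1 h2 h3 h4 h5
    exact ⟨⟨h1, h2⟩, h5, h3, h4⟩
  constructor
  · obtain ⟨N, hN⟩ := eventually_atTop.mp hNev
    refine ⟨3 * (γ:ℝ), N, fun n hn => ?_⟩
    obtain ⟨⟨h2γ, h3⟩, hlog1, hA, hB⟩ := hN n hn
    obtain ⟨f1, f2, f3⟩ := ER.eps_facts γ n hγ h3 hlog1 hA hB
    exact ER.var_final γ (by omega) h2γ _ tsub_le_self (by rw [f1]; exact f2)
  · refine ⟨2, ?_⟩
    have hμle1 : ∀ (n : ℕ) (p : ℝ≥0∞) (hp : p ≤ 1) (s : Set (Sym2 (Fin n) → Bool)),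
        (erMeasure n p hp s).toReal ≤ 1 := by
      intro n p hp s
      calc (erMeasure n p hp s).toReal ≤ (1 : ℝ≥0∞).toReal :=
        ENNReal.toReal_mono ENNReal.one_ne_top prob_le_one
      _ = 1 := ENNReal.toReal_one
    apply tendsto_of_tendsto_of_tendsto_of_le_of_le'
      (g := fun n : ℕ => 1 - 3 * (γ:ℝ) / Real.log n) (h := fun _ : ℕ => (1:ℝ))
    · have h2 : Tendsto (fun n : ℕ => 3 * (γ:ℝ) / Real.log n) atTop (nhds 0) :=
        Tendsto.div_atTop tendsto_const_nhds hlogts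
      have := tendsto_const_nhds (x := (1:ℝ)) (f := atTop (α := ℕ)) |>.sub h2
      simpa using this
    · exact tendsto_const_nhds
    · -- main estimate
      filter_upwards [hNev] with n hP
      obtain ⟨⟨h2γ, h3⟩, hlog1, hA, hB⟩ := hP
      obtain ⟨f1, f2, f3⟩ := ER.eps_facts γ n hγ h3 hlog1 hA hB
      set pr : ℝ≥0∞ := 1 - ENNReal.ofReal (Real.log n / (n : ℝ) ^ ((1 : ℝ) / ((γ : ℝ) - 1)))
        with hpr
      set μ := erMeasure n pr tsub_le_self with hμ
      set X : (Sym2 (Fin n) → Bool) → ℝ := fun σ => (domCount (graphOf σ) γ : ℝ) with hX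
      set m : ℝ := ∫ σ, X σ ∂μ with hm
      set L : ℝ := Real.log n ^ γ * (n:ℝ) ^ ((γ:ℝ) - 1 / ((γ:ℝ) - 1)) with hL
      have hn0 : (0:ℝ) < n := by exact_mod_cast (by omega : 0 < n)
      have hnr1 : (1:ℝ) ≤ n := by exact_mod_cast (by omega : 1 ≤ n)
      have hlogpos : (0:ℝ) < Real.log n := by linarith
      have hrpowpos : (0:ℝ) < (n:ℝ) ^ ((γ:ℝ) - 1 / ((γ:ℝ) - 1)) :=
        Real.rpow_pos_of_pos hn0 _
      have hLpos : 0 < L := mul_pos (pow_pos hlogpos γ) hrpowpos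
      have hexp : (n.choose γ : ℝ) - m ≤ L := by
        have h := ER.exp_lower (n := n) γ pr tsub_le_self
        rw [f1] at h
        rw [f3] at h
        exact h
      have hvar := ER.var_final (n := n) γ (by omega) h2γ pr tsub_le_self
        (by rw [f1]; exact f2)
      have hcheb := ER.cheb pr tsub_le_self X L hLpos
      have hGsub : {σ : Sym2 (Fin n) → Bool |
            ¬ ((n.choose γ : ℝ) - 2 * Real.log n ^ γ * (n:ℝ) ^ ((γ:ℝ) - 1 / ((γ:ℝ) - 1))
              ≤ X σ)} ⊆ {σ | X σ ≤ m - L} := by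
        intro σ hσ
        simp only [Set.mem_setOf_eq, not_le] at hσ ⊢
        have h2L : 2 * Real.log n ^ γ * (n:ℝ) ^ ((γ:ℝ) - 1 / ((γ:ℝ) - 1)) = 2 * L := by
          rw [hL]; ring
        rw [h2L] at hσ
        linarith
      have hμGc : (μ {σ : Sym2 (Fin n) → Bool |
            ¬ ((n.choose γ : ℝ) - 2 * Real.log n ^ γ * (n:ℝ) ^ ((γ:ℝ) - 1 / ((γ:ℝ) - 1))
              ≤ X σ)}).toReal ≤ 3 * (γ:ℝ) / Real.log n := by
        have step1 : (μ {σ : Sym2 (Fin n) → Bool |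
              ¬ ((n.choose γ : ℝ) - 2 * Real.log n ^ γ * (n:ℝ) ^ ((γ:ℝ) - 1 / ((γ:ℝ) - 1))
                ≤ X σ)}).toReal ≤ (μ {σ | X σ ≤ m - L}).toReal :=
          ENNReal.toReal_mono (measure_ne_top _ _) (measure_mono hGsub)
        have step2 : (μ {σ | X σ ≤ m - L}).toReal
            ≤ ((∫ x, (X x) ^ 2 ∂μ) - m ^ 2) / L ^ 2 := hcheb
        have hL2pos : (0:ℝ) < L ^ 2 := by positivity
        have step3 : ((∫ x, (X x) ^ 2 ∂μ) - m ^ 2) / L ^ 2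
            ≤ (3 * (γ:ℝ) * (n : ℝ) ^ (2 * γ - 1)) / L ^ 2 := by
          gcongr
        have step4 : (3 * (γ:ℝ) * (n : ℝ) ^ (2 * γ - 1)) / L ^ 2
            ≤ 3 * (γ:ℝ) / Real.log n := by
          rw [div_le_div_iff₀ hL2pos hlogpos]
          have hL2 : L ^ 2 = Real.log n ^ (2 * γ)
              * ((n:ℝ) ^ ((γ:ℝ) - 1 / ((γ:ℝ) - 1) + ((γ:ℝ) - 1 / ((γ:ℝ) - 1)))) := by
            rw [hL, mul_pow, ← pow_mul, Real.rpow_add hn0, sq]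
            ring_nf
          have hexple : ((2 * γ - 1 : ℕ) : ℝ)
              ≤ (γ:ℝ) - 1 / ((γ:ℝ) - 1) + ((γ:ℝ) - 1 / ((γ:ℝ) - 1)) := by
            have hcast : ((2 * γ - 1 : ℕ) : ℝ) = 2 * (γ:ℝ) - 1 := by
              have : (1:ℕ) ≤ 2 * γ := by omega
              push_cast [Nat.cast_sub this]
              ring
            rw [hcast]
            have hc12 : 1 / ((γ:ℝ) - 1) ≤ 1 / 2 := by
              apply one_div_le_one_div_of_le <;> linarith
            linarith
          have hpow_le : (n:ℝ) ^ (2 * γ - 1 : ℕ)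
              ≤ (n:ℝ) ^ ((γ:ℝ) - 1 / ((γ:ℝ) - 1) + ((γ:ℝ) - 1 / ((γ:ℝ) - 1))) := by
            rw [← Real.rpow_natCast (n:ℝ) (2 * γ - 1)]
            exact Real.rpow_le_rpow_of_exponent_le hnr1 hexple
          have hlog_le : Real.log n ≤ Real.log n ^ (2 * γ) := by
            calc Real.log n = 1 * Real.log n := by ring
              _ ≤ Real.log n ^ (2 * γ - 1) * Real.log n := by
                  apply mul_le_mul_of_nonneg_right _ hlogpos.le
                  exact one_le_pow₀ hlog1
              _ = Real.log n ^ (2 * γ) := by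
                  rw [← pow_succ]
                  congr 1
                  omega
          calc 3 * (γ:ℝ) * (n : ℝ) ^ (2 * γ - 1) * Real.log n
              ≤ 3 * (γ:ℝ) * ((n:ℝ) ^ ((γ:ℝ) - 1 / ((γ:ℝ) - 1) + ((γ:ℝ) - 1 / ((γ:ℝ) - 1)))
                  * Real.log n ^ (2 * γ)) := by
                have h1 : (0:ℝ) ≤ 3 * (γ:ℝ) := by positivity
                have h2 : (n : ℝ) ^ (2 * γ - 1) * Real.log n
                    ≤ (n:ℝ) ^ ((γ:ℝ) - 1 / ((γ:ℝ) - 1) + ((γ:ℝ) - 1 / ((γ:ℝ) - 1)))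
                      * Real.log n ^ (2 * γ) := by
                  apply mul_le_mul hpow_le hlog_le hlogpos.le (le_trans (by positivity) hpow_le)
                calc 3 * (γ:ℝ) * (n : ℝ) ^ (2 * γ - 1) * Real.log n
                    = 3 * (γ:ℝ) * ((n : ℝ) ^ (2 * γ - 1) * Real.log n) := by ring
                  _ ≤ _ := mul_le_mul_of_nonneg_left h2 h1
            _ = 3 * (γ:ℝ) * L ^ 2 := by rw [hL2]; ring
        linarith
      -- convert to the goal about the measure of the good set
      have hcompl : (μ {σ : Sym2 (Fin n) → Bool |
            (n.choose γ : ℝ) - 2 * Real.log n ^ γ * (n:ℝ) ^ ((γ:ℝ) - 1 / ((γ:ℝ) - 1))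
              ≤ X σ}).toReal
          = 1 - (μ {σ : Sym2 (Fin n) → Bool |
            ¬ ((n.choose γ : ℝ) - 2 * Real.log n ^ γ * (n:ℝ) ^ ((γ:ℝ) - 1 / ((γ:ℝ) - 1))
              ≤ X σ)}).toReal := by
        have hcc : {σ : Sym2 (Fin n) → Bool |
            ¬ ((n.choose γ : ℝ) - 2 * Real.log n ^ γ * (n:ℝ) ^ ((γ:ℝ) - 1 / ((γ:ℝ) - 1))
              ≤ X σ)} = {σ : Sym2 (Fin n) → Bool |
            (n.choose γ : ℝ) - 2 * Real.log n ^ γ * (n:ℝ) ^ ((γ:ℝ) - 1 / ((γ:ℝ) - 1))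
              ≤ X σ}ᶜ := rfl
        rw [hcc, prob_compl_eq_one_sub MeasurableSet.of_discrete,
          ENNReal.toReal_sub_of_le prob_le_one ENNReal.one_ne_top, ENNReal.toReal_one]
        ring
      rw [hcompl]
      linarith
    · filter_upwards with n
      exact hμle1 _ _ _ _
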